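/- (Convergence of CAGrad, minimum-gradient form.) Let L : ℝⁿ → ℝ be differentiable with H-Lipschitz gradient for some H > 0, let 0 < α ≤ 1/H and c ∈ [0, 1). Let (θₜ)ₜ≥0 be a sequence in ℝⁿ and (dₜ)ₜ≥0 directions with θₜ₊₁ = θₜ − α dₜ and ‖∇L(θₜ) − dₜ‖ ≤ c‖∇L(θₜ)‖ for every t. Then for every T ≥ 0, min_{0 ≤ t ≤ T} ‖∇L(θₜ)‖² ≤ 2(L(θ₀) − L(θ_{T+1})) / (α(1 − c²)(T + 1)). -/

import Mathlib

open RealInnerProductSpace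

lemma descent_lemma {n : ℕ} (L : EuclideanSpace ℝ (Fin n) → ℝ) (H : ℝ) (hH : 0 < H)
    (hdiff : Differentiable ℝ L)
    (hlip : ∀ x y : EuclideanSpace ℝ (Fin n),
      ‖gradient L x - gradient L y‖ ≤ H * ‖x - y‖)
    (x y : EuclideanSpace ℝ (Fin n)) :
    L y ≤ L x + ⟪gradient L x, y - x⟫ + H / 2 * ‖y - x‖ ^ 2 := by
  set v := y - x with hv
  set ψ : ℝ → ℝ := fun t =>
    L (x + t • v) - t * ⟪gradient L x, v⟫ - H / 2 * t ^ 2 * ‖v‖ ^ 2 with hψ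
  have hpath : ∀ t : ℝ, HasDerivAt (fun s : ℝ => x + s • v) v t := by
    intro t
    simpa using ((hasDerivAt_id t).smul_const v).const_add x
  have hderivL : ∀ t : ℝ,
      HasDerivAt (fun s : ℝ => L (x + s • v)) ⟪gradient L (x + t • v), v⟫ t := by
    intro t
    have h1 := ((hdiff (x + t • v)).hasGradientAt.hasFDerivAt).comp_hasDerivAt t (hpath t)
    exact h1.congr_deriv (by simp [InnerProductSpace.toDual_apply_apply])
  have hderivψ : ∀ t : ℝ, HasDerivAt ψ
      (⟪gradient L (x + t • v), v⟫ - ⟪gradient L x, v⟫ - H * t * ‖v‖ ^ 2) t := by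
    intro t
    have h2 : HasDerivAt (fun s : ℝ => s * ⟪gradient L x, v⟫) ⟪gradient L x, v⟫ t := by
      simpa using (hasDerivAt_id t).mul_const (⟪gradient L x, v⟫)
    have h3 : HasDerivAt (fun s : ℝ => H / 2 * s ^ 2 * ‖v‖ ^ 2) (H * t * ‖v‖ ^ 2) t := by
      have := (((hasDerivAt_pow 2 t).const_mul (H / 2)).mul_const (‖v‖ ^ 2))
      exact this.congr_deriv (by rw [show (2:ℕ) - 1 = 1 from rfl]; push_cast; ring)
    exact ((hderivL t).sub h2).sub h3
  have hdψ : Differentiable ℝ ψ := fun t => (hderivψ t).differentiableAt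
  have hmono : AntitoneOn ψ (Set.Icc (0 : ℝ) 1) := by
    apply antitoneOn_of_deriv_nonpos (convex_Icc 0 1)
    · exact hdψ.continuous.continuousOn
    · exact hdψ.differentiableOn
    · intro t ht
      rw [(hderivψ t).deriv]
      rw [interior_Icc] at ht
      have hineq : ⟪gradient L (x + t • v) - gradient L x, v⟫ ≤ H * t * ‖v‖ ^ 2 := by
        calc ⟪gradient L (x + t • v) - gradient L x, v⟫
            ≤ ‖gradient L (x + t • v) - gradient L x‖ * ‖v‖ := real_inner_le_norm _ _
          _ ≤ (H * ‖(x + t • v) - x‖) * ‖v‖ := by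
              gcongr; exact hlip _ _
          _ = H * t * ‖v‖ ^ 2 := by
              rw [add_sub_cancel_left, norm_smul, Real.norm_eq_abs, abs_of_pos ht.1]; ring
      have := inner_sub_left (𝕜 := ℝ) (gradient L (x + t • v)) (gradient L x) v
      linarith [hineq, this.symm.le, this.le]
  have h01 := hmono (Set.left_mem_Icc.2 zero_le_one) (Set.right_mem_Icc.2 zero_le_one)
    zero_le_one
  have hψ0 : ψ 0 = L x := by simp [hψ]
  have hψ1 : ψ 1 = L y - ⟪gradient L x, v⟫ - H / 2 * ‖v‖ ^ 2 := by
    simp [hψ, hv]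
  rw [hψ0, hψ1] at h01
  linarith

/-- Convergence of CAGrad, minimum-gradient form:
`min_{0 ≤ t ≤ T} ‖∇L θₜ‖² ≤ 2 (L θ₀ - L θ_{T+1}) / (α (1 - c²) (T + 1))`. -/
theorem cagrad_convergence_min {n : ℕ} (L : EuclideanSpace ℝ (Fin n) → ℝ) (H α c : ℝ)
    (hH : 0 < H) (hα : 0 < α) (hαH : α ≤ 1 / H) (hc0 : 0 ≤ c) (hc1 : c < 1)
    (hdiff : Differentiable ℝ L)
    (hlip : ∀ x y : EuclideanSpace ℝ (Fin n),
      ‖gradient L x - gradient L y‖ ≤ H * ‖x - y‖)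
    (θ d : ℕ → EuclideanSpace ℝ (Fin n))
    (hupd : ∀ t : ℕ, θ (t + 1) = θ t - α • d t)
    (hd : ∀ t : ℕ, ‖gradient L (θ t) - d t‖ ≤ c * ‖gradient L (θ t)‖) :
    ∀ T : ℕ, (Finset.range (T + 1)).inf' Finset.nonempty_range_add_one
        (fun t => ‖gradient L (θ t)‖ ^ 2) ≤
      2 * (L (θ 0) - L (θ (T + 1))) / (α * (1 - c ^ 2) * (T + 1)) := by
  -- per-step inequality
  have hstep : ∀ t : ℕ,
      α * (1 - c ^ 2) / 2 * ‖gradient L (θ t)‖ ^ 2 ≤ L (θ t) - L (θ (t + 1)) := by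
    intro t
    have hdl := descent_lemma L H hH hdiff hlip (θ t) (θ (t + 1))
    set g := gradient L (θ t) with hg
    have hsub : θ (t + 1) - θ t = -(α • d t) := by rw [hupd t]; abel
    rw [hsub] at hdl
    have hinner : ⟪g, -(α • d t)⟫ = -(α * ⟪g, d t⟫) := by
      rw [inner_neg_right, real_inner_smul_right]
    have hnorm : ‖-(α • d t)‖ ^ 2 = α ^ 2 * ‖d t‖ ^ 2 := by
      rw [norm_neg, norm_smul, mul_pow, Real.norm_eq_abs, sq_abs]
    rw [hinner, hnorm] at hdl
    -- H α ≤ 1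
    have hHα : H * α ≤ 1 := by
      rw [div_eq_mul_inv, one_mul] at hαH
      calc H * α ≤ H * H⁻¹ := by gcongr
        _ = 1 := mul_inv_cancel₀ hH.ne'
    have h1 : H / 2 * (α ^ 2 * ‖d t‖ ^ 2) ≤ α / 2 * ‖d t‖ ^ 2 := by
      have : H * α * (α * ‖d t‖ ^ 2) ≤ 1 * (α * ‖d t‖ ^ 2) := by
        apply mul_le_mul_of_nonneg_right hHα (by positivity)
      nlinarith
    have hexp : ‖g - d t‖ ^ 2 = ‖g‖ ^ 2 - 2 * ⟪g, d t⟫ + ‖d t‖ ^ 2 := by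
      exact norm_sub_sq_real g (d t)
    have hbd : ‖g - d t‖ ^ 2 ≤ c ^ 2 * ‖g‖ ^ 2 := by
      have h := hd t
      rw [← hg] at h
      calc ‖g - d t‖ ^ 2 ≤ (c * ‖g‖) ^ 2 := by
            apply sq_le_sq' _ h; nlinarith [norm_nonneg (g - d t)]
        _ = c ^ 2 * ‖g‖ ^ 2 := by ring
    nlinarith
  -- telescoping sum
  intro T
  have hsum : ∀ T : ℕ,
      α * (1 - c ^ 2) / 2 * ∑ t ∈ Finset.range (T + 1), ‖gradient L (θ t)‖ ^ 2
        ≤ L (θ 0) - L (θ (T + 1)) := by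
    intro T
    induction T with
    | zero => simpa using hstep 0
    | succ k ih =>
      rw [Finset.sum_range_succ, mul_add]
      have := hstep (k + 1)
      linarith
  set m := (Finset.range (T + 1)).inf' Finset.nonempty_range_add_one
    (fun t => ‖gradient L (θ t)‖ ^ 2) with hm
  have hmle : ∀ t ∈ Finset.range (T + 1), m ≤ ‖gradient L (θ t)‖ ^ 2 := fun t ht =>
    Finset.inf'_le _ ht
  have hms : (T + 1 : ℝ) * m ≤ ∑ t ∈ Finset.range (T + 1), ‖gradient L (θ t)‖ ^ 2 := by
    calc (T + 1 : ℝ) * m = ∑ _t ∈ Finset.range (T + 1), m := by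
          rw [Finset.sum_const, Finset.card_range]; push_cast; ring
      _ ≤ _ := Finset.sum_le_sum hmle
  have hpos : (0 : ℝ) < α * (1 - c ^ 2) * (T + 1) := by
    have : (0:ℝ) < 1 - c ^ 2 := by nlinarith
    positivity
  rw [le_div_iff₀ hpos]
  have h2 := hsum T
  have hfac : (0:ℝ) < α * (1 - c ^ 2) / 2 := by
    have : (0:ℝ) < 1 - c ^ 2 := by nlinarith
    positivity
  nlinarith [mul_le_mul_of_nonneg_left hms hfac.le]
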